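/- (Theorem 7.2, type B) Fix n ≥ 1 and let Q be the valued translation quiver realizing ℤB_{n+1} described in the context. A subset C ⊆ ℤ × {0,…,n} is a configuration of Q if and only if there exists a symmetric 2-Brauer relation σ of rank 2n such that C = { (p,r) ∈ ℤ × {0,…,n} : the image of p+r in ZMod (2n) equals σ applied to the image of p in ZMod (2n) }. Moreover σ is uniquely determined by C, so this assignment is a bijection between the configurations of ℤB_{n+1} and the symmetric 2-Brauer relations of rank 2n. -/

import Mathlib

/-- Valued sum over the arrows `y → v` of the valued translation quiver realizing
`ℤB_{n+1}`: the vertex set is `ℤ × {0,…,n}`, with arrows `(q,s) → (q,s+1)` for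
`s < n` and `(q,s) → (q+1,s-1)` for `0 < s`; each arrow `(q,n-1) → (q,n)` carries
valuation `(2,1)` and each arrow `(q,n) → (q+1,n-1)` carries valuation `(1,2)`,
all other arrows carry valuation `(1,1)`. Here each summand `f v` is weighted
by the first component of the valuation of the arrow `y → v`. -/
def stepB (n : ℕ) (f : ℤ × ℕ → ℕ) (y : ℤ × ℕ) : ℤ :=
  (if y.2 < n then (if y.2 = n - 1 then 2 else 1) * (f (y.1, y.2 + 1) : ℤ) else 0) +
    (if 0 < y.2 then (f (y.1 + 1, y.2 - 1) : ℤ) else 0)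

/-- `hB n x k y` is `h_k(y,x)` for `ℤB_{n+1}`: `h_0(y,x) = δ(y,x)` and, for `k > 0`,
`h_k(y,x) = max(h'_k(y,x), 0)` where
`h'_k(y,x) = ∑_{α : y → v} d_α · h_{k-1}(v,x) - h_{k-2}(τ⁻¹ y, x)` and
`τ⁻¹(q,s) = (q+1,s)`. -/
def hB (n : ℕ) (x : ℤ × ℕ) : ℕ → ℤ × ℕ → ℕ
  | 0 => fun y => if y = x then 1 else 0
  | 1 => fun y => (stepB n (hB n x 0) y).toNat
  | k + 2 => fun y =>
      (stepB n (hB n x (k + 1)) y - (hB n x k (y.1 + 1, y.2) : ℤ)).toNat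

/-- `h'B n x k y` is `h'_k(y,x)` for `ℤB_{n+1}` (meaningful for `k ≥ 1`). -/
def h'B (n : ℕ) (x : ℤ × ℕ) (k : ℕ) (y : ℤ × ℕ) : ℤ :=
  stepB n (hB n x (k - 1)) y -
    (if 2 ≤ k then (hB n x (k - 2) (y.1 + 1, y.2) : ℤ) else 0)

/-- `hTotB n y x = h(y,x) = ∑_{k ≥ 0} h_k(y,x)` for `ℤB_{n+1}`. -/
noncomputable def hTotB (n : ℕ) (y x : ℤ × ℕ) : ℕ := ∑ᶠ k : ℕ, hB n x k y

/-- `ω` for `ℤB_{n+1}`: `ω(p,r) = (p-n, r)`. -/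
def ωB (n : ℕ) (v : ℤ × ℕ) : ℤ × ℕ := (v.1 - n, v.2)

/-- A configuration of the valued translation quiver realizing `ℤB_{n+1}`. -/
def IsConfigB (n : ℕ) (C : Set (ℤ × ℕ)) : Prop :=
  (∀ v ∈ C, v.2 ≤ n) ∧
    (∀ y : ℤ × ℕ, y.2 ≤ n → ∃ c ∈ C, 0 < hTotB n y c) ∧
    ωB n '' C = C ∧
    ∀ c ∈ C, ∀ d ∈ C,
      hTotB n d c =
        if d = c ∧ c = ωB n c then 2
        else if d = c ∨ d = ωB n c then 1
        else 0

/-- A symmetric `2`-Brauer relation of rank `2n`: an involution `σ` of `ZMod (2n)`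
which is noncrossing and symmetric with respect to rotation by `π`,
i.e. `σ (i + n) = σ i + n` for all `i`. -/
def IsSymTwoBrauer (n : ℕ) (σ : ZMod (2 * n) → ZMod (2 * n)) : Prop :=
  Function.Involutive σ ∧
    (¬ ∃ i j : ZMod (2 * n),
        i.val < j.val ∧ j.val < (σ i).val ∧ (σ i).val < (σ j).val) ∧
    ∀ i : ZMod (2 * n), σ (i + (n : ZMod (2 * n))) = σ i + (n : ZMod (2 * n))




def cfZ (n a b q s : ℤ) : ℤ :=
  (if a ≤ q + s ∧ q + s ≤ a + b ∧ a + b ≤ q + 2*n ∧ q ≤ a then (1:ℤ) else 0) +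
  (if s < n ∧ a + b - n ≤ q + s ∧ q + s ≤ a + n ∧ a - n ≤ q ∧ q ≤ a + b - n then (1:ℤ) else 0)

lemma cfZ_nonneg (n a b q s : ℤ) : 0 ≤ cfZ n a b q s := by
  unfold cfZ; split_ifs <;> omega

set_option maxHeartbeats 1000000 in
private lemma cf_rec (n b s : ℕ) (a q : ℤ) (hn : 1 ≤ n) (hb : b ≤ n)
    (hs : s ≤ n) (hD : 2 ≤ 2*(a-q)+(b:ℤ)-(s:ℤ)) :
    cfZ n a b q s =
      max ((if s < n then (if s = n-1 then 2 else 1) * cfZ n a b q ((s:ℤ)+1) else 0) +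
        (if 0 < s then cfZ n a b (q+1) ((s:ℤ)-1) else 0) - cfZ n a b (q+1) s) 0 := by
  simp only [cfZ]
  split_ifs <;> omega

lemma hB_eq (n : ℕ) (hn : 1 ≤ n) (a : ℤ) (b : ℕ) (hb : b ≤ n) :
    ∀ k (q : ℤ) (s : ℕ), s ≤ n →
      (hB n (a, b) k (q, s) : ℤ) =
        if (k : ℤ) = 2*(a-q) + b - s then cfZ n a b q s else 0 := by
  intro k
  induction k using Nat.strong_induction_on with
  | _ k ih =>
    match k with
    | 0 =>
      intro q s hs
      simp only [hB, Prod.mk.injEq, cfZ]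
      split_ifs <;> omega
    | 1 =>
      intro q s hs
      simp only [hB, stepB, Prod.mk.injEq, cfZ]
      split_ifs <;> omega
    | (k+2) =>
      intro q s hs
      show ((stepB n (hB n (a,b) (k + 1)) (q,s) - (hB n (a,b) k ((q,s).1 + 1, (q,s).2) : ℤ)).toNat : ℤ) = _
      simp only [stepB]
      rw [Int.toNat_eq_max]
      rw [ih k (by omega) (q+1) s hs]
      by_cases hK : ((k:ℤ) + 2) = 2*(a-q) + b - s
      · rw [if_pos (by push_cast; push_cast at hK; omega : (k:ℤ) = 2*(a-(q+1)) + b - s),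
          if_pos (by push_cast at hK ⊢; omega : (((k+2 : ℕ)):ℤ) = 2*(a-q) + b - s)]
        have key := cf_rec n b s a q hn hb hs (by push_cast at hK; omega)
        by_cases hsn : s < n
        · rw [if_pos hsn] at key ⊢
          rw [ih (k+1) (by omega) q (s+1) (by omega),
            if_pos (by push_cast at hK ⊢; omega : ((k+1 : ℕ):ℤ) = 2*(a-q) + b - (s+1:ℕ))]
          by_cases hs0 : 0 < s
          · rw [if_pos hs0] at key ⊢
            rw [ih (k+1) (by omega) (q+1) (s-1) (by omega),
              if_pos (by push_cast [Nat.cast_sub hs0] at hK ⊢; omega :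
                ((k+1 : ℕ):ℤ) = 2*(a-(q+1)) + b - (s-1:ℕ))]
            push_cast [Nat.cast_sub hs0] at key ⊢
            exact key.symm
          · rw [if_neg hs0] at key ⊢
            push_cast at key ⊢
            exact key.symm
        · rw [if_neg hsn] at key ⊢
          by_cases hs0 : 0 < s
          · rw [if_pos hs0] at key ⊢
            rw [ih (k+1) (by omega) (q+1) (s-1) (by omega),
              if_pos (by push_cast [Nat.cast_sub hs0] at hK ⊢; omega :
                ((k+1 : ℕ):ℤ) = 2*(a-(q+1)) + b - (s-1:ℕ))]
            push_cast [Nat.cast_sub hs0] at key ⊢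
            exact key.symm
          · rw [if_neg hs0] at key ⊢
            push_cast at key ⊢
            exact key.symm
      · rw [if_neg (by push_cast; push_cast at hK; omega : ¬ (k:ℤ) = 2*(a-(q+1)) + b - s),
          if_neg (by push_cast at hK ⊢; omega : ¬ (((k+2 : ℕ)):ℤ) = 2*(a-q) + b - s)]
        by_cases hsn : s < n
        · rw [if_pos hsn, ih (k+1) (by omega) q (s+1) (by omega),
            if_neg (by push_cast at hK ⊢; omega : ¬ ((k+1 : ℕ):ℤ) = 2*(a-q) + b - (s+1:ℕ))]
          by_cases hs0 : 0 < s
          · rw [if_pos hs0, ih (k+1) (by omega) (q+1) (s-1) (by omega),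
              if_neg (by push_cast [Nat.cast_sub hs0] at hK ⊢; omega :
                ¬ ((k+1 : ℕ):ℤ) = 2*(a-(q+1)) + b - (s-1:ℕ))]
            simp
          · rw [if_neg hs0]; simp
        · rw [if_neg hsn]
          by_cases hs0 : 0 < s
          · rw [if_pos hs0, ih (k+1) (by omega) (q+1) (s-1) (by omega),
              if_neg (by push_cast [Nat.cast_sub hs0] at hK ⊢; omega :
                ¬ ((k+1 : ℕ):ℤ) = 2*(a-(q+1)) + b - (s-1:ℕ))]
            simp
          · rw [if_neg hs0]; simp

lemma hTot_eq (n : ℕ) (hn : 1 ≤ n) (a : ℤ) (b : ℕ) (hb : b ≤ n) (q : ℤ) (s : ℕ) (hs : s ≤ n) :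
    (hTotB n (q, s) (a, b) : ℤ) = cfZ n a b q (s : ℤ) := by
  unfold hTotB
  by_cases hD : 0 ≤ 2*(a-q) + (b:ℤ) - s
  · have h1 : ∑ᶠ k : ℕ, hB n (a,b) k (q,s) = hB n (a,b) (2*(a-q) + (b:ℤ) - s).toNat (q,s) := by
      apply finsum_eq_single
      intro k hk
      have := hB_eq n hn a b hb k q s hs
      rw [if_neg (by omega)] at this
      exact_mod_cast this
    rw [h1]
    have := hB_eq n hn a b hb (2*(a-q) + (b:ℤ) - s).toNat q s hs
    rwa [if_pos (by omega)] at this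
  · have h1 : ∑ᶠ k : ℕ, hB n (a,b) k (q,s) = 0 := by
      apply finsum_eq_zero_of_forall_eq_zero
      intro k
      have := hB_eq n hn a b hb k q s hs
      rw [if_neg (by omega)] at this
      exact_mod_cast this
    rw [h1]
    have : cfZ n a b q s = 0 := by
      simp only [cfZ]; split_ifs <;> omega
    rw [this]; simp



lemma bar_eq_iff (m : ℕ) (x y : ℤ) :
    ((x : ZMod m) = (y : ZMod m)) ↔ (m : ℤ) ∣ (x - y) := by
  rw [ZMod.intCast_eq_intCast_iff, Int.modEq_iff_dvd, dvd_sub_comm]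

lemma val_bar (m : ℕ) [NeZero m] (x : ℤ) :
    (((x : ZMod m)).val : ℤ) = x % (m : ℤ) := ZMod.val_intCast x

lemma bar_val (m : ℕ) [NeZero m] (i : ZMod m) : ((i.val : ℕ) : ZMod m) = i :=
  ZMod.natCast_rightInverse i

private lemma dvd_cases {m z : ℤ} (hm : 0 < m) (h : m ∣ z) (hlo : -(2*m) < z) (hhi : z < m) :
    z = 0 ∨ z = -m := by
  obtain ⟨k, rfl⟩ := h
  have hk1 : -2 < k := by nlinarith
  have hk2 : k < 1 := by nlinarith
  interval_cases k <;> omega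

lemma cross_lemma (n : ℕ) (σ : ZMod (2*n) → ZMod (2*n)) (hn : 1 ≤ n)
    (hinv : Function.Involutive σ)
    (hnc : ¬ ∃ i j : ZMod (2*n), i.val < j.val ∧ j.val < (σ i).val ∧ (σ i).val < (σ j).val)
    (u v U V : ℤ)
    (h1 : ((v : ZMod (2*n))) = σ (u : ZMod (2*n)))
    (h2 : ((V : ZMod (2*n))) = σ (U : ZMod (2*n)))
    (o1 : u ≤ U) (o2 : U ≤ v) (o3 : v ≤ V) (o4 : V ≤ u + 2*n) :
    ((2*n : ℤ) ∣ U - u) ∨ ((2*n:ℤ) ∣ v - U) ∨ ((2*n:ℤ) ∣ V - v) ∨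
      ((2*n:ℤ) ∣ v - u) ∨ ((2*n:ℤ) ∣ V - U) := by
  haveI : NeZero (2*n) := ⟨by omega⟩
  by_contra hcon
  push_neg at hcon
  obtain ⟨d1, d2, d3, d4, d5⟩ := hcon
  have hσv : σ ((v : ZMod (2*n))) = (u : ZMod (2*n)) := by rw [h1]; exact hinv _
  have hσV : σ ((V : ZMod (2*n))) = (U : ZMod (2*n)) := by rw [h2]; exact hinv _
  have d6 : ¬ ((2*n:ℤ) ∣ V - u) := by
    intro h
    have hVu : ((V : ZMod (2*n))) = (u : ZMod (2*n)) := (bar_eq_iff _ _ _).2 h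
    apply d2
    have : ((U : ZMod (2*n))) = ((v : ZMod (2*n))) := by
      rw [← hσV, hVu, h1]
    exact (dvd_sub_comm).mp ((bar_eq_iff _ _ _).1 this)
  have hM : (0:ℤ) < 2*n := by push_cast; omega
  -- nonzero window facts
  have w1a : U - u ≠ 0 := fun h => d1 (by simp [h])
  have w1b : U - u ≠ 2*n := fun h => d1 (by simp [h])
  have w2a : v - U ≠ 0 := fun h => d2 (by simp [h])
  have w2b : v - U ≠ 2*n := fun h => d2 (by simp [h])
  have w3a : V - v ≠ 0 := fun h => d3 (by simp [h])
  have w3b : V - v ≠ 2*n := fun h => d3 (by simp [h])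
  have w4a : v - u ≠ 2*n := fun h => d4 (by simp [h])
  have w5a : V - U ≠ 2*n := fun h => d5 (by simp [h])
  have w6a : V - u ≠ 0 := fun h => d6 (by simp [h])
  have w6b : V - u ≠ 2*n := fun h => d6 (by simp [h])
  -- emod values
  have e1 : (((u : ZMod (2*n))).val : ℤ) = u % (2*n : ℤ) := by
    have := val_bar (2*n) u; push_cast at this ⊢; omega
  have e2 : (((U : ZMod (2*n))).val : ℤ) = U % (2*n : ℤ) := by
    have := val_bar (2*n) U; push_cast at this ⊢; omega
  have e3 : (((v : ZMod (2*n))).val : ℤ) = v % (2*n : ℤ) := by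
    have := val_bar (2*n) v; push_cast at this ⊢; omega
  have e4 : (((V : ZMod (2*n))).val : ℤ) = V % (2*n : ℤ) := by
    have := val_bar (2*n) V; push_cast at this ⊢; omega
  have b1 : 0 ≤ u % (2*n:ℤ) ∧ u % (2*n:ℤ) < 2*n := ⟨Int.emod_nonneg _ (by omega), Int.emod_lt_of_pos _ hM⟩
  have b2 : 0 ≤ U % (2*n:ℤ) ∧ U % (2*n:ℤ) < 2*n := ⟨Int.emod_nonneg _ (by omega), Int.emod_lt_of_pos _ hM⟩
  have b3 : 0 ≤ v % (2*n:ℤ) ∧ v % (2*n:ℤ) < 2*n := ⟨Int.emod_nonneg _ (by omega), Int.emod_lt_of_pos _ hM⟩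
  have b4 : 0 ≤ V % (2*n:ℤ) ∧ V % (2*n:ℤ) < 2*n := ⟨Int.emod_nonneg _ (by omega), Int.emod_lt_of_pos _ hM⟩
  have key : ∀ x y : ℤ, x ≤ y → y - x < 2*n →
      y % (2*n:ℤ) = x % (2*n:ℤ) + (y - x) ∨ y % (2*n:ℤ) = x % (2*n:ℤ) + (y - x) - 2*n := by
    intro x y hxy hlt
    have hdvd : (2*n:ℤ) ∣ (y % (2*n:ℤ) - x % (2*n:ℤ) - (y - x)) := by
      have hx := Int.mul_ediv_add_emod x (2*n:ℤ)
      have hy := Int.mul_ediv_add_emod y (2*n:ℤ)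
      exact ⟨y / (2*n:ℤ) * (-1) + x / (2*n:ℤ), by linarith⟩
    have bx : 0 ≤ x % (2*n:ℤ) ∧ x % (2*n:ℤ) < 2*n := ⟨Int.emod_nonneg _ (by omega), Int.emod_lt_of_pos _ hM⟩
    have by' : 0 ≤ y % (2*n:ℤ) ∧ y % (2*n:ℤ) < 2*n := ⟨Int.emod_nonneg _ (by omega), Int.emod_lt_of_pos _ hM⟩
    rcases dvd_cases hM hdvd (by omega) (by omega) with h | h
    · left; omega
    · right; omega
  have r12 := key u U o1 (by omega)
  have r23 := key U v o2 (by omega)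
  have r34 := key v V o3 (by omega)
  apply hnc
  rcases r12 with h12 | h12 <;> rcases r23 with h23 | h23 <;> rcases r34 with h34 | h34
  · -- no wrap
    exact ⟨(u : ZMod (2*n)), (U : ZMod (2*n)), by omega, by rw [← h1]; omega, by rw [← h1, ← h2]; omega⟩
  · -- wrap at 3 : order m4 < m1 < m2 < m3
    exact ⟨(V : ZMod (2*n)), (u : ZMod (2*n)), by omega, by rw [hσV]; omega, by rw [hσV, ← h1]; omega⟩
  · -- wrap at 2 : order m3 < m4 < m1 < m2
    exact ⟨(v : ZMod (2*n)), (V : ZMod (2*n)), by omega, by rw [hσv]; omega, by rw [hσv, hσV]; omega⟩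
  · omega
  · -- wrap at 1 : order m2 < m3 < m4 < m1
    exact ⟨(U : ZMod (2*n)), (v : ZMod (2*n)), by omega, by rw [← h2]; omega, by rw [← h2, hσv]; omega⟩
  · omega
  · omega
  · omega


lemma cfZ_def (n a b q s : ℤ) : cfZ n a b q s =
  (if a ≤ q + s ∧ q + s ≤ a + b ∧ a + b ≤ q + 2*n ∧ q ≤ a then (1:ℤ) else 0) +
  (if s < n ∧ a + b - n ≤ q + s ∧ q + s ≤ a + n ∧ a - n ≤ q ∧ q ≤ a + b - n then (1:ℤ) else 0) := rfl

lemma win (n : ℕ) (hn : 1 ≤ n) {z : ℤ} (h : ((2*n : ℕ) : ℤ) ∣ z)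
    (hlo : -(4*(n:ℤ)) < z) (hhi : z < 4*(n:ℤ)) :
    z = -(2*(n:ℤ)) ∨ z = 0 ∨ z = 2*(n:ℤ) := by
  obtain ⟨k, hk⟩ := h
  push_cast at hk
  have hM : (0:ℤ) < 2*n := by exact_mod_cast (by omega : (0:ℤ) < 2*(n:ℤ))
  have h1 : -2 < k := by
    have : (2*(n:ℤ)) * (-2) < (2*(n:ℤ)) * k := by nlinarith
    exact lt_of_mul_lt_mul_left this (by positivity)
  have h2 : k < 2 := by
    have : (2*(n:ℤ)) * k < (2*(n:ℤ)) * 2 := by nlinarith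
    exact lt_of_mul_lt_mul_left this (by positivity)
  interval_cases k <;> omega


lemma bar_valZ (m : ℕ) [NeZero m] (i : ZMod m) : (((i.val : ℤ)) : ZMod m) = i := by
  push_cast
  exact bar_val m i

section Backward

variable {n : ℕ} {σ : ZMod (2 * n) → ZMod (2 * n)}

lemma claimR1 (hn : 1 ≤ n) (hσ : IsSymTwoBrauer n σ) (a q : ℤ) (b s : ℕ)
    (hb : b ≤ n) (hs : s ≤ n)
    (hc : (((a + b : ℤ)) : ZMod (2*n)) = σ ((a : ℤ) : ZMod (2*n)))
    (hd : (((q + s : ℤ)) : ZMod (2*n)) = σ ((q : ℤ) : ZMod (2*n)))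
    (r1 : a ≤ q + s) (r2 : q + s ≤ a + b) (r3 : a + b ≤ q + 2*n) (r4 : q ≤ a) :
    (q = a ∧ s = b) ∨ (q = a - n ∧ s = b) := by
  obtain ⟨hinv, hnc, hsym⟩ := hσ
  have base1 : ((2*n:ℕ):ℤ) ∣ a - q → (q = a ∧ s = b) ∨ (q = a - n ∧ s = b) := by
    intro hdvd
    have haq : a = q := by rcases win n hn hdvd (by omega) (by omega) with h|h|h <;> omega
    subst haq
    left
    refine ⟨rfl, ?_⟩
    have h2 : (((a + s : ℤ)) : ZMod (2*n)) = (((a + b : ℤ)) : ZMod (2*n)) := by rw [hc, hd]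
    rw [bar_eq_iff] at h2
    rcases win n hn h2 (by omega) (by omega) with h|h|h <;> omega
  have base2 : a = q + s → (q = a ∧ s = b) ∨ (q = a - n ∧ s = b) := by
    intro haqs
    have h1 : ((a:ℤ) : ZMod (2*n)) = σ ((q:ℤ) : ZMod (2*n)) := by rw [← hd, haqs]
    have h2 : (((a+b:ℤ)) : ZMod (2*n)) = ((q:ℤ) : ZMod (2*n)) := by
      rw [hc, h1, hinv]
    rw [bar_eq_iff] at h2
    rcases win n hn h2 (by omega) (by omega) with h|h|h
    · omega
    · left; omega
    · right; omega
  rcases cross_lemma n σ hn hinv hnc q (q+s) a (a+b) hd hc r4 r1 r2 r3 with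
    h | h | h | h | h
  · exact base1 (by exact_mod_cast h)
  · have : a = q + s := by
      rcases win n hn (by exact_mod_cast h) (by omega) (by omega) with h'|h'|h' <;> omega
    exact base2 this
  · rcases win n hn (by exact_mod_cast h) (by omega) (by omega) with h'|h'|h'
    · omega
    · -- a + b = q + s
      apply base1
      have heq : (((a+b:ℤ)) : ZMod (2*n)) = (((q+s:ℤ)) : ZMod (2*n)) := by
        rw [bar_eq_iff]; exact ⟨0, by push_cast; omega⟩
      rw [hc, hd] at heq
      have := hinv.injective heq
      rw [bar_eq_iff] at this
      exact this
    · -- a + b = q + s + 2n, so s = 0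
      have hs0 : (s:ℤ) = 0 := by omega
      apply base1
      have h2 : (((a+b:ℤ)) : ZMod (2*n)) = ((q:ℤ) : ZMod (2*n)) := by
        rw [bar_eq_iff]; exact ⟨1, by push_cast; omega⟩
      have h3 : ((q:ℤ) : ZMod (2*n)) = σ ((q:ℤ) : ZMod (2*n)) := by
        rw [← hd]; congr 1; omega
      have h4 : σ ((a:ℤ) : ZMod (2*n)) = σ ((q:ℤ) : ZMod (2*n)) := by
        rw [← hc, ← h3, h2]
      have := hinv.injective h4
      rw [bar_eq_iff] at this
      exact this
  · -- 2n | s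
    have hs0 : (s:ℤ) = 0 := by
      rcases win n hn (by exact_mod_cast h) (by omega) (by omega) with h'|h'|h' <;> omega
    exact base1 ⟨0, by omega⟩
  · -- 2n | b
    have hb0 : (b:ℤ) = 0 := by
      rcases win n hn (by exact_mod_cast h) (by omega) (by omega) with h'|h'|h' <;> omega
    exact base2 (by omega)

end Backward

section Backward2

variable {n : ℕ} {σ : ZMod (2 * n) → ZMod (2 * n)}

lemma nu_add_nu (hn : 1 ≤ n) : ((n:ℕ) : ZMod (2*n)) + ((n:ℕ) : ZMod (2*n)) = 0 := by
  have : ((2*n : ℕ) : ZMod (2*n)) = 0 := ZMod.natCast_self _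
  push_cast at this
  linear_combination this

lemma bar_add_n (x : ℤ) : (((x + (n:ℤ)) : ℤ) : ZMod (2*n)) = ((x : ℤ) : ZMod (2*n)) + ((n:ℕ) : ZMod (2*n)) := by
  push_cast; ring

lemma bar_sub_n (hn : 1 ≤ n) (x : ℤ) :
    (((x - (n:ℤ)) : ℤ) : ZMod (2*n)) = ((x : ℤ) : ZMod (2*n)) + ((n:ℕ) : ZMod (2*n)) := by
  have h := nu_add_nu (n := n) hn
  push_cast at h ⊢
  linear_combination -h

lemma mirror_chord (hn : 1 ≤ n) (hσ : IsSymTwoBrauer n σ) (a : ℤ) (b : ℕ)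
    (hc : (((a + b : ℤ)) : ZMod (2*n)) = σ ((a : ℤ) : ZMod (2*n))) :
    (((a + (n:ℤ)) : ℤ) : ZMod (2*n)) = σ (((a + b - n : ℤ)) : ZMod (2*n)) := by
  obtain ⟨hinv, hnc, hsym⟩ := hσ
  have h1 : (((a + b - n : ℤ)) : ZMod (2*n)) = σ ((a:ℤ) : ZMod (2*n)) + ((n:ℕ) : ZMod (2*n)) := by
    rw [bar_sub_n hn, hc]
  rw [h1, hsym, hinv, bar_add_n]

lemma claimR2 (hn : 1 ≤ n) (hσ : IsSymTwoBrauer n σ) (a q : ℤ) (b s : ℕ)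
    (hb : b ≤ n) (hs : s ≤ n) (hsn : (s:ℤ) < n)
    (hc : (((a + b : ℤ)) : ZMod (2*n)) = σ ((a : ℤ) : ZMod (2*n)))
    (hd : (((q + s : ℤ)) : ZMod (2*n)) = σ ((q : ℤ) : ZMod (2*n)))
    (r1 : a + b - n ≤ q + s) (r2 : q + s ≤ a + n) (r3 : a - n ≤ q) (r4 : q ≤ a + b - n) :
    q = a - n ∧ s = b := by
  have hct := mirror_chord hn hσ a b hc
  obtain ⟨hinv, hnc, hsym⟩ := hσ
  have base_i : ((2*n:ℕ):ℤ) ∣ (a + b - n - q) → q = a - n ∧ s = b := by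
    intro hdvd
    have hAq : a + b - n = q := by
      rcases win n hn hdvd (by omega) (by omega) with h|h|h <;> omega
    have hbar : (((a + (n:ℤ)) : ℤ) : ZMod (2*n)) = (((q + s : ℤ)) : ZMod (2*n)) := by
      rw [hct, hd]
      congr 1
      rw [bar_eq_iff]
      exact ⟨0, by push_cast; omega⟩
    rw [bar_eq_iff] at hbar
    rcases win n hn hbar (by omega) (by omega) with h|h|h
    · omega
    · omega
    · constructor <;> omega
  have base_ii : a + b - n = q + s → q = a - n ∧ s = b := by
    intro hA
    have h1 : σ (((a+b-n : ℤ)) : ZMod (2*n)) = ((q:ℤ) : ZMod (2*n)) := by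
      rw [hA, hd, hinv]
    have h2 : (((a + (n:ℤ)) : ℤ) : ZMod (2*n)) = ((q:ℤ) : ZMod (2*n)) := by rw [hct, h1]
    rw [bar_eq_iff] at h2
    rcases win n hn h2 (by omega) (by omega) with h|h|h
    · omega
    · omega
    · constructor <;> omega
  rcases cross_lemma n σ hn hinv hnc q (q+s) (a+b-n) (a+n) hd hct r4 r1 r2 (by omega) with
    h | h | h | h | h
  · exact base_i (by exact_mod_cast h)
  · have : a + b - n = q + s := by
      rcases win n hn (by exact_mod_cast h) (by omega) (by omega) with h'|h'|h' <;> omega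
    exact base_ii this
  · rcases win n hn (by exact_mod_cast h) (by omega) (by omega) with h'|h'|h'
    · omega
    · -- a + n = q + s
      apply base_i
      have heq : (((a + (n:ℤ)) : ℤ) : ZMod (2*n)) = (((q+s:ℤ)) : ZMod (2*n)) := by
        rw [bar_eq_iff]; exact ⟨0, by push_cast; omega⟩
      rw [hct, hd] at heq
      have := hinv.injective heq
      rw [bar_eq_iff] at this
      exact (by exact_mod_cast this)
    · -- a + n = q + s + 2n : s = 0, a = q + n
      have hs0 : (s:ℤ) = 0 := by omega
      apply base_i
      have h2 : (((a + (n:ℤ)) : ℤ) : ZMod (2*n)) = ((q:ℤ) : ZMod (2*n)) := by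
        rw [bar_eq_iff]; exact ⟨1, by push_cast; omega⟩
      have h3 : ((q:ℤ) : ZMod (2*n)) = σ ((q:ℤ) : ZMod (2*n)) := by
        rw [← hd]; congr 1; omega
      have h4 : σ (((a+b-n:ℤ)) : ZMod (2*n)) = σ ((q:ℤ) : ZMod (2*n)) := by
        rw [← hct, ← h3, h2]
      have := hinv.injective h4
      rw [bar_eq_iff] at this
      exact this
  · -- 2n | s : s = 0 and A = q
    have hs0 : (s:ℤ) = 0 := by
      rcases win n hn (by exact_mod_cast h) (by omega) (by omega) with h'|h'|h' <;> omega
    exact base_i ⟨0, by omega⟩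
  · -- 2n | 2n - b : b = 0, q = a - n
    have hb0 : (b:ℤ) = 0 := by
      rcases win n hn (by exact_mod_cast h) (by omega) (by omega) with h'|h'|h' <;> omega
    exact base_i ⟨0, by omega⟩
  
end Backward2

section Backward3

variable {n : ℕ} {σ : ZMod (2 * n) → ZMod (2 * n)}

def Cset (n : ℕ) (σ : ZMod (2 * n) → ZMod (2 * n)) : Set (ℤ × ℕ) :=
  {v : ℤ × ℕ | v.2 ≤ n ∧
    ((v.1 + (v.2 : ℤ) : ℤ) : ZMod (2 * n)) = σ ((v.1 : ℤ) : ZMod (2 * n))}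

lemma mem_Cset {p : ℤ} {r : ℕ} :
    ((p, r) : ℤ × ℕ) ∈ Cset n σ ↔
      r ≤ n ∧ (((p + r : ℤ)) : ZMod (2*n)) = σ ((p:ℤ) : ZMod (2*n)) := Iff.rfl

lemma mem_shift_up (hn : 1 ≤ n) (hσ : IsSymTwoBrauer n σ) {p : ℤ} {r : ℕ}
    (h : ((p, r) : ℤ × ℕ) ∈ Cset n σ) : ((p + n, r) : ℤ × ℕ) ∈ Cset n σ := by
  obtain ⟨hinv, hnc, hsym⟩ := hσ
  obtain ⟨h1, h2⟩ := h
  refine ⟨h1, ?_⟩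
  have e1 : ((p + (n:ℤ) + r : ℤ) : ZMod (2*n)) = (((p + r : ℤ)) : ZMod (2*n)) + ((n:ℕ) : ZMod (2*n)) := by
    push_cast; ring
  have e2 : ((p + (n:ℤ) : ℤ) : ZMod (2*n)) = ((p : ℤ) : ZMod (2*n)) + ((n:ℕ) : ZMod (2*n)) := by
    push_cast; ring
  rw [e1, e2, hsym, h2]

lemma mem_shift_down (hn : 1 ≤ n) (hσ : IsSymTwoBrauer n σ) {p : ℤ} {r : ℕ}
    (h : ((p, r) : ℤ × ℕ) ∈ Cset n σ) : ((p - n, r) : ℤ × ℕ) ∈ Cset n σ := by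
  have := mem_shift_up hn hσ (p := p - n) (r := r) -- wrong direction; do directly
  obtain ⟨hinv, hnc, hsym⟩ := hσ
  obtain ⟨h1, h2⟩ := h
  refine ⟨h1, ?_⟩
  have hν := nu_add_nu (n := n) hn
  have e1 : ((p - (n:ℤ) + r : ℤ) : ZMod (2*n)) = (((p + r : ℤ)) : ZMod (2*n)) + ((n:ℕ) : ZMod (2*n)) := by
    push_cast at hν ⊢; linear_combination -hν
  have e2 : ((p - (n:ℤ) : ℤ) : ZMod (2*n)) = ((p : ℤ) : ZMod (2*n)) + ((n:ℕ) : ZMod (2*n)) := by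
    push_cast at hν ⊢; linear_combination -hν
  rw [e1, e2, hsym, h2]

lemma backward (hn : 1 ≤ n) (hσ : IsSymTwoBrauer n σ) : IsConfigB n (Cset n σ) := by
  haveI : NeZero (2*n) := ⟨by omega⟩
  obtain ⟨hinv, hnc, hsym⟩ := hσ
  refine ⟨fun v hv => hv.1, ?_, ?_, ?_⟩
  · -- (C1)
    rintro ⟨q, s⟩ hs
    simp only at hs
    set w := q + (s:ℤ) with hw
    set t := (σ ((w:ℤ) : ZMod (2*n)) - ((w:ℤ) : ZMod (2*n))).val with htdef
    have ht2 : t < 2*n := ZMod.val_lt _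
    have hwt : (((w + t : ℤ)) : ZMod (2*n)) = σ ((w:ℤ) : ZMod (2*n)) := by
      have : (((t:ℕ)) : ZMod (2*n)) = σ ((w:ℤ) : ZMod (2*n)) - ((w:ℤ) : ZMod (2*n)) :=
        bar_val _ _
      push_cast
      rw [this]; ring
    by_cases hcase : t ≤ n
    · refine ⟨(w, t), ⟨hcase, hwt⟩, ?_⟩
      have e := hTot_eq n hn w t hcase q s hs
      have : (1:ℤ) ≤ cfZ n w t q s := by
        rw [cfZ_def]; split_ifs <;> omega
      omega
    · -- t > n
      have hmem' : ((w + t - 2*n, 2*n - t) : ℤ × ℕ) ∈ Cset n σ := by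
        refine ⟨by omega, ?_⟩
        have e1 : (w + (t:ℤ) - 2*(n:ℤ)) + ((2*n - t : ℕ) : ℤ) = w := by
          push_cast [Nat.cast_sub (le_of_lt (by omega : t < 2*n))]; ring
        have e2 : ((w + (t:ℤ) - 2*(n:ℤ) : ℤ) : ZMod (2*n)) = (((w + t:ℤ)) : ZMod (2*n)) := by
          rw [bar_eq_iff]; exact ⟨-1, by push_cast; ring⟩
        calc (((w + (t:ℤ) - 2*(n:ℤ)) + ((2*n - t : ℕ):ℤ) : ℤ) : ZMod (2*n))
            = ((w : ℤ) : ZMod (2*n)) := by rw [e1]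
          _ = σ (((w + (t:ℤ) - 2*(n:ℤ) : ℤ)) : ZMod (2*n)) := by
              rw [e2, hwt, hinv]
      by_cases hst : 2*(n:ℤ) ≤ (s:ℤ) + t
      · refine ⟨(w + t - 2*n, 2*n - t), hmem', ?_⟩
        have e := hTot_eq n hn (w + t - 2*n) (2*n - t) (by omega) q s hs
        have hc2 : ((2*n - t : ℕ) : ℤ) = 2*(n:ℤ) - t := by
          push_cast [Nat.cast_sub (le_of_lt (by omega : t < 2*n))]; ring
        have : (1:ℤ) ≤ cfZ n (w + t - 2*n) ((2*n - t : ℕ) : ℤ) q s := by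
          rw [cfZ_def, hc2]; split_ifs <;> omega
        omega
      · have hsn : (s:ℤ) < n := by omega
        have hmem'' := mem_shift_up hn ⟨hinv, hnc, hsym⟩ hmem'
        refine ⟨(w + t - 2*n + n, 2*n - t), hmem'', ?_⟩
        have e := hTot_eq n hn (w + t - 2*n + n) (2*n - t) (by omega) q s hs
        have hc2 : ((2*n - t : ℕ) : ℤ) = 2*(n:ℤ) - t := by
          push_cast [Nat.cast_sub (le_of_lt (by omega : t < 2*n))]; ring
        have : (1:ℤ) ≤ cfZ n (w + t - 2*n + n) ((2*n - t : ℕ) : ℤ) q s := by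
          rw [cfZ_def, hc2]; split_ifs <;> omega
        omega
  · -- ω-stability
    ext ⟨p, r⟩
    constructor
    · rintro ⟨⟨p', r'⟩, hmem, heq⟩
      simp only [ωB, Prod.mk.injEq] at heq
      obtain ⟨h1, h2⟩ := heq
      have : p' = p + n := by omega
      subst this; subst h2
      have := mem_shift_down hn ⟨hinv, hnc, hsym⟩ hmem
      simpa using this
    · intro h
      exact ⟨(p + n, r), mem_shift_up hn ⟨hinv, hnc, hsym⟩ h, by simp [ωB]⟩
  · -- (C2)
    rintro ⟨a, b⟩ hc ⟨q, s⟩ hd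
    obtain ⟨hb, hcc⟩ := hc
    obtain ⟨hs, hdd⟩ := hd
    have hωc : ¬((a, b) : ℤ × ℕ) = ωB n (a, b) := by
      simp only [ωB, Prod.mk.injEq]
      intro ⟨h1, _⟩; omega
    rw [if_neg (fun h => hωc h.2)]
    have e := hTot_eq n hn a b hb q s hs
    by_cases h1 : ((q, s) : ℤ × ℕ) = (a, b)
    · rw [if_pos (Or.inl h1)]
      injection h1 with hqa hsb; subst hqa; subst hsb
      have : cfZ n q s q s = 1 := by
        rw [cfZ_def]; split_ifs <;> omega
      omega
    by_cases h2 : ((q, s) : ℤ × ℕ) = ωB n (a, b)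
    · rw [if_pos (Or.inr h2)]
      simp only [ωB, Prod.mk.injEq] at h2
      obtain ⟨rfl, rfl⟩ := h2
      have : cfZ n a s (a - (n:ℤ)) s = 1 := by
        rw [cfZ_def]; split_ifs <;> omega
      omega
    · rw [if_neg (by tauto)]
      simp only [Prod.mk.injEq, not_and] at h1
      simp only [ωB, Prod.mk.injEq, not_and] at h2
      have : cfZ n a b q s = 0 := by
        rw [cfZ_def]
        split_ifs with hR1 hR2 hR2
        · exfalso
          rcases claimR1 hn ⟨hinv, hnc, hsym⟩ a q b s hb hs hcc hdd hR1.1 hR1.2.1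
            (by omega) hR1.2.2.2 with ⟨hq, hss⟩ | ⟨hq, hss⟩
          · exact h1 hq hss
          · exact h2 hq hss
        · exfalso
          rcases claimR1 hn ⟨hinv, hnc, hsym⟩ a q b s hb hs hcc hdd hR1.1 hR1.2.1
            (by omega) hR1.2.2.2 with ⟨hq, hss⟩ | ⟨hq, hss⟩
          · exact h1 hq hss
          · exact h2 hq hss
        · exfalso
          obtain ⟨hq, hss⟩ := claimR2 hn ⟨hinv, hnc, hsym⟩ a q b s hb hs hR2.1 hcc hdd
            hR2.2.1 hR2.2.2.1 hR2.2.2.2.1 hR2.2.2.2.2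
          exact h2 hq hss
        · ring
      omega

end Backward3

section Forward

variable {n : ℕ} {C : Set (ℤ × ℕ)}

/-- symmetric chord relation induced by C -/
def SymRel (n : ℕ) (C : Set (ℤ × ℕ)) (i j : ZMod (2*n)) : Prop :=
  ∃ (p : ℤ) (r : ℕ), ((p, r) : ℤ × ℕ) ∈ C ∧
    ((((p : ℤ)) : ZMod (2*n)) = i ∧ (((p + r : ℤ)) : ZMod (2*n)) = j ∨
     (((p : ℤ)) : ZMod (2*n)) = j ∧ (((p + r : ℤ)) : ZMod (2*n)) = i)

lemma symRel_symm {i j : ZMod (2*n)} (h : SymRel n C i j) : SymRel n C j i := by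
  obtain ⟨p, r, hm, h | h⟩ := h
  · exact ⟨p, r, hm, Or.inr h⟩
  · exact ⟨p, r, hm, Or.inl h⟩

namespace ForwardProof

variable (hn : 1 ≤ n) (hC : IsConfigB n C)

lemma perC (hC : IsConfigB n C) : ∀ (p : ℤ) (r : ℕ), ((p,r) : ℤ × ℕ) ∈ C →
    ∀ k : ℤ, ((p + k*n, r) : ℤ × ℕ) ∈ C := by
  obtain ⟨-, -, hC3, -⟩ := hC
  have down : ∀ (p : ℤ) (r : ℕ), ((p,r) : ℤ × ℕ) ∈ C → ((p - n, r) : ℤ × ℕ) ∈ C := by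
    intro p r h
    rw [← hC3]
    exact ⟨(p, r), h, rfl⟩
  have up : ∀ (p : ℤ) (r : ℕ), ((p,r) : ℤ × ℕ) ∈ C → ((p + n, r) : ℤ × ℕ) ∈ C := by
    intro p r h
    rw [← hC3] at h
    obtain ⟨⟨p', r'⟩, hm, heq⟩ := h
    simp only [ωB, Prod.mk.injEq] at heq
    have : p' = p + n := by omega
    subst this
    rwa [heq.2] at hm
  intro p r h k
  induction k using Int.induction_on with
  | zero => simpa using h
  | succ k ih =>
      have := up _ _ ih
      convert this using 2
      push_cast; ring
  | pred k ih =>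
      have := down _ _ ih
      convert this using 2
      push_cast; ring

lemma shift_to (hC : IsConfigB n C) {p p' : ℤ} {r : ℕ}
    (hdvd : ((2*n : ℕ) : ℤ) ∣ (p' - p)) (h : ((p,r) : ℤ × ℕ) ∈ C) :
    ((p',r) : ℤ × ℕ) ∈ C := by
  obtain ⟨m, hm⟩ := hdvd
  have := perC hC p r h (2*m)
  have he : p + 2*m*(n:ℤ) = p' := by push_cast at hm; linarith
  rwa [he] at this

lemma key4 (hn : 1 ≤ n) (hC : IsConfigB n C) {a q : ℤ} {b s : ℕ}
    (hc : ((a,b) : ℤ × ℕ) ∈ C) (hd : ((q,s) : ℤ × ℕ) ∈ C)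
    (hne : cfZ n a b q s ≠ 0) :
    (q = a ∧ s = b) ∨ (q = a - n ∧ s = b) := by
  obtain ⟨hCb, -, -, hC4⟩ := hC
  have hb : b ≤ n := hCb _ hc
  have hs : s ≤ n := hCb _ hd
  have e := hTot_eq n hn a b hb q s hs
  have h4 := hC4 (a,b) hc (q,s) hd
  by_cases h1 : ((q,s) : ℤ × ℕ) = (a,b)
  · injection h1 with h1a h1b; exact Or.inl ⟨h1a, h1b⟩
  by_cases h2 : ((q,s) : ℤ × ℕ) = ωB n (a,b)
  · simp only [ωB, Prod.mk.injEq] at h2; exact Or.inr ⟨h2.1, h2.2⟩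
  · exfalso
    rw [if_neg (fun h => h1 h.1), if_neg (by tauto)] at h4
    rw [h4] at e
    exact hne (by omega)

lemma colUnique (hn : 1 ≤ n) (hC : IsConfigB n C) {p : ℤ} {r r' : ℕ}
    (h : ((p,r) : ℤ × ℕ) ∈ C) (h' : ((p,r') : ℤ × ℕ) ∈ C) : r = r' := by
  have hb := hC.1 _ h
  have hb' := hC.1 _ h'
  rcases le_total r' r with hle | hle
  · rcases key4 hn hC h h' (by rw [cfZ_def]; split_ifs <;> omega) with ⟨_, h⟩ | ⟨hq, _⟩
    · omega
    · exfalso; omega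
  · rcases key4 hn hC h' h (by rw [cfZ_def]; split_ifs <;> omega) with ⟨_, h⟩ | ⟨hq, _⟩
    · omega
    · exfalso; omega

lemma sym_total (hn : 1 ≤ n) (hC : IsConfigB n C) (i : ZMod (2*n)) :
    ∃ j, SymRel n C i j := by
  haveI : NeZero (2*n) := ⟨by omega⟩
  obtain ⟨⟨a, b⟩, hcm, hpos⟩ := hC.2.1 ((i.val : ℤ), 0) (by simp)
  have hb : b ≤ n := hC.1 _ hcm
  have e := hTot_eq n hn a b hb (i.val : ℤ) 0 (by omega)
  push_cast at e
  have hcf : cfZ n a b (i.val : ℤ) 0 ≠ 0 := by omega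
  rw [cfZ_def] at hcf
  by_cases hR1 : a ≤ (i.val:ℤ) + 0 ∧ (i.val:ℤ) + 0 ≤ a + b ∧ a + b ≤ (i.val:ℤ) + 2*n ∧ (i.val:ℤ) ≤ a
  · have ha : a = (i.val : ℤ) := by omega
    refine ⟨(((a + b : ℤ)) : ZMod (2*n)), a, b, hcm, Or.inl ⟨?_, rfl⟩⟩
    rw [ha]; exact bar_valZ _ i
  · rw [if_neg hR1] at hcf
    have hR2 : (0:ℤ) < n ∧ a + b - n ≤ (i.val:ℤ) + 0 ∧ (i.val:ℤ) + 0 ≤ a + n ∧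
        a - n ≤ (i.val:ℤ) ∧ (i.val:ℤ) ≤ a + b - n := by
      by_contra hcon
      rw [if_neg (by exact_mod_cast hcon)] at hcf
      exact hcf rfl
    have hend : a + b = (i.val : ℤ) + n := by omega
    have hmem := perC hC a b hcm (-1)
    refine ⟨(((a + (-1)*n : ℤ)) : ZMod (2*n)), a + (-1)*(n:ℤ), b, hmem, Or.inr ⟨rfl, ?_⟩⟩
    have : a + (-1)*(n:ℤ) + b = (i.val : ℤ) := by omega
    rw [this]; exact bar_valZ _ i

lemma sym_unique (hn : 1 ≤ n) (hC : IsConfigB n C) {i j j' : ZMod (2*n)}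
    (h : SymRel n C i j) (h' : SymRel n C i j') : j = j' := by
  haveI : NeZero (2*n) := ⟨by omega⟩
  -- helper for the start/end mixed case
  have mixed : ∀ (p : ℤ) (r : ℕ) (p' : ℤ) (r' : ℕ),
      ((p,r) : ℤ × ℕ) ∈ C → ((p',r') : ℤ × ℕ) ∈ C →
      (((p:ℤ)) : ZMod (2*n)) = i → (((p' + r' : ℤ)) : ZMod (2*n)) = i →
      (((p + r : ℤ)) : ZMod (2*n)) = (((p' : ℤ)) : ZMod (2*n)) := by
    intro p r p' r' hm hm' hpi hp'i
    have hb : r ≤ n := hC.1 _ hm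
    have hb' : r' ≤ n := hC.1 _ hm'
    have hdvd : ((2*n:ℕ):ℤ) ∣ ((p - r') - p') := by
      have h0 : (((p' + r' : ℤ)) : ZMod (2*n)) = (((p:ℤ)) : ZMod (2*n)) := by rw [hp'i, hpi]
      rw [bar_eq_iff] at h0
      have h3 : (p - (r':ℤ)) - p' = -((p' + r') - p) := by ring
      rw [h3]
      exact dvd_neg.mpr h0
    have hPm : ((p - r', r') : ℤ × ℕ) ∈ C := shift_to hC hdvd hm'
    have hcf : cfZ n p r (p - (r':ℤ)) r' ≠ 0 := by
      rw [cfZ_def]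
      have c1 : p ≤ (p - (r':ℤ)) + r' := by omega
      split_ifs <;> omega
    rcases key4 hn hC hm hPm hcf with ⟨hP, hrr⟩ | ⟨hP, hrr⟩
    · -- p - r' = p, so r' = 0, r = 0
      have hr0 : (r':ℤ) = 0 := by omega
      have hreq : (r:ℤ) = r' := by omega
      rw [bar_eq_iff]
      obtain ⟨m, hmm⟩ := hdvd
      exact ⟨m, by push_cast at hmm ⊢; linarith⟩
    · -- p - r' = p - n, r' = r = n
      have hreq : (r:ℤ) = r' := by omega
      have hrn : (r':ℤ) = n := by omega
      rw [bar_eq_iff]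
      obtain ⟨m, hmm⟩ := hdvd
      exact ⟨m + 1, by push_cast at hmm ⊢; linarith⟩
  obtain ⟨p, r, hm, hcase⟩ := h
  obtain ⟨p', r', hm', hcase'⟩ := h'
  rcases hcase with ⟨hpi, hprj⟩ | ⟨hpj, hpri⟩ <;>
    rcases hcase' with ⟨hpi', hprj'⟩ | ⟨hpj', hpri'⟩
  · -- start/start
    have hdvd : ((2*n:ℕ):ℤ) ∣ (p - p') := by
      have : (((p':ℤ)) : ZMod (2*n)) = (((p:ℤ)) : ZMod (2*n)) := by rw [hpi', hpi]
      rw [bar_eq_iff] at this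
      exact (dvd_sub_comm).mp this
    have hPm : ((p, r') : ℤ × ℕ) ∈ C := shift_to hC hdvd hm'
    have hreq : r = r' := colUnique hn hC hm hPm
    rw [← hprj, ← hprj', hreq, bar_eq_iff]
    obtain ⟨m, hmm⟩ := hdvd
    exact ⟨m, by push_cast at hmm ⊢; linarith⟩
  · -- start(i) / end(i)
    have := mixed p r p' r' hm hm' hpi hpri'
    rw [hprj, hpj'] at this
    exact this
  · -- end(i) / start(i)
    have := mixed p' r' p r hm' hm hpi' hpri
    rw [hprj', hpj] at this
    exact this.symm
  · -- end/end
    have hdvd : ((2*n:ℕ):ℤ) ∣ ((p + r - r') - p') := by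
      have : (((p' + r' : ℤ)) : ZMod (2*n)) = (((p + r : ℤ)) : ZMod (2*n)) := by
        rw [hpri', hpri]
      rw [bar_eq_iff] at this
      have h2 : (p + r - r') - p' = -(p' + r' - (p + r)) := by ring
      rw [h2]
      exact dvd_neg.mpr this
    have hPm : ((p + r - r', r') : ℤ × ℕ) ∈ C := shift_to hC hdvd hm'
    have hb : r ≤ n := hC.1 _ hm
    have hb' : r' ≤ n := hC.1 _ hm'
    have goal_eq : (((p + (r:ℤ) - r' : ℤ)) : ZMod (2*n)) = (((p':ℤ)) : ZMod (2*n)) := by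
      rw [bar_eq_iff]; exact hdvd
    rcases le_total (p + (r:ℤ) - r') p with hle | hle
    · have hcf : cfZ n p r (p + (r:ℤ) - r') r' ≠ 0 := by
        rw [cfZ_def]; split_ifs <;> omega
      rcases key4 hn hC hm hPm hcf with ⟨hP, hrr⟩ | ⟨hP, hrr⟩
      · rw [← hpj, ← hpj', bar_eq_iff]
        have h5 : p - p' = p + (r:ℤ) - r' - p' := by omega
        rw [h5]; exact hdvd
      · exfalso; omega
    · have hcf : cfZ n (p + (r:ℤ) - r') r' p r ≠ 0 := by
        rw [cfZ_def]; split_ifs <;> omega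
      rcases key4 hn hC hPm hm hcf with ⟨hP, hrr⟩ | ⟨hP, hrr⟩
      · rw [← hpj, ← hpj', bar_eq_iff]
        have h5 : p - p' = p + (r:ℤ) - r' - p' := by omega
        rw [h5]; exact hdvd
      · exfalso; omega

end ForwardProof

end Forward

namespace ForwardProof

variable {hn : 1 ≤ n} {hC : IsConfigB n C}

noncomputable def σC (hn : 1 ≤ n) (hC : IsConfigB n C) : ZMod (2*n) → ZMod (2*n) :=
  fun i => Classical.choose (sym_total hn hC i)

lemma σC_spec (i : ZMod (2*n)) : SymRel n C i (σC hn hC i) :=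
  Classical.choose_spec (sym_total hn hC i)

lemma σC_eq {i j : ZMod (2*n)} (h : SymRel n C i j) : σC hn hC i = j :=
  sym_unique hn hC (σC_spec (hn := hn) (hC := hC) i) h

lemma σC_inv : Function.Involutive (σC hn hC) := fun i =>
  σC_eq (symRel_symm (σC_spec (hn := hn) (hC := hC) i))

lemma σC_rot (i : ZMod (2*n)) :
    σC hn hC (i + ((n:ℕ) : ZMod (2*n))) = σC hn hC i + ((n:ℕ) : ZMod (2*n)) := by
  apply σC_eq
  obtain ⟨p, r, hm, hca⟩ := σC_spec (hn := hn) (hC := hC) i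
  have hm' := perC hC p r hm 1
  have e1 : (((p + 1*(n:ℤ) : ℤ)) : ZMod (2*n)) = (((p:ℤ)) : ZMod (2*n)) + ((n:ℕ) : ZMod (2*n)) := by
    push_cast; ring
  have e2 : (((p + 1*(n:ℤ) + r : ℤ)) : ZMod (2*n)) = (((p + r:ℤ)) : ZMod (2*n)) + ((n:ℕ) : ZMod (2*n)) := by
    push_cast; ring
  rcases hca with ⟨ha, hb⟩ | ⟨ha, hb⟩
  · exact ⟨p + 1*(n:ℤ), r, hm', Or.inl ⟨by rw [e1, ha], by rw [e2, hb]⟩⟩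
  · exact ⟨p + 1*(n:ℤ), r, hm', Or.inr ⟨by rw [e1, ha], by rw [e2, hb]⟩⟩

lemma chord_of (hn : 1 ≤ n) (hC : IsConfigB n C) (x : ZMod (2*n))
    (hlt : x.val < (σC hn hC x).val) :
    (((x.val : ℤ), ((σC hn hC x).val - x.val : ℕ)) : ℤ × ℕ) ∈ C ∨
    (((((σC hn hC x).val : ℤ)), (x.val + 2*n - (σC hn hC x).val : ℕ)) : ℤ × ℕ) ∈ C := by
  haveI : NeZero (2*n) := ⟨by omega⟩
  set y := σC hn hC x with hy
  obtain ⟨p, r, hm, hca⟩ := σC_spec (hn := hn) (hC := hC) x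
  have hvx : 0 ≤ (x.val : ℤ) ∧ (x.val : ℤ) < 2*n := ⟨by positivity, by exact_mod_cast ZMod.val_lt x⟩
  have hvy : 0 ≤ (y.val : ℤ) ∧ (y.val : ℤ) < 2*n := ⟨by positivity, by exact_mod_cast ZMod.val_lt y⟩
  have hr : r ≤ n := hC.1 _ hm
  rcases hca with ⟨ha, hb⟩ | ⟨ha, hb⟩
  · left
    have hdvd : ((2*n:ℕ):ℤ) ∣ ((x.val : ℤ) - p) := by
      rw [← bar_eq_iff]; rw [ha]; exact bar_valZ _ x
    have hm2 : (((x.val : ℤ), r) : ℤ × ℕ) ∈ C := shift_to hC hdvd hm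
    have hb2 : (((((x.val : ℤ)) + r : ℤ)) : ZMod (2*n)) = (((p + r : ℤ)) : ZMod (2*n)) := by
      rw [bar_eq_iff]
      obtain ⟨m, hmm⟩ := hdvd
      exact ⟨m, by linarith⟩
    rw [hb] at hb2
    have hdvd2 : ((2*n:ℕ):ℤ) ∣ (((x.val : ℤ) + r) - (y.val : ℤ)) := by
      rw [← bar_eq_iff, hb2, hy, bar_valZ]
    have hrval : (r : ℤ) = (y.val : ℤ) - x.val := by
      rcases win n hn hdvd2 (by omega) (by omega) with h | h | h <;> omega
    have : ((y.val - x.val : ℕ) : ℤ) = (r : ℤ) := by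
      push_cast [Nat.cast_sub hlt.le]; omega
    have hrr : (y.val - x.val : ℕ) = r := by omega
    rwa [hrr]
  · right
    have hdvd : ((2*n:ℕ):ℤ) ∣ ((y.val : ℤ) - p) := by
      rw [← bar_eq_iff]; rw [ha]; exact bar_valZ _ y
    have hm2 : (((y.val : ℤ), r) : ℤ × ℕ) ∈ C := shift_to hC hdvd hm
    have hb2 : (((((y.val : ℤ)) + r : ℤ)) : ZMod (2*n)) = (((p + r : ℤ)) : ZMod (2*n)) := by
      rw [bar_eq_iff]
      obtain ⟨m, hmm⟩ := hdvd
      exact ⟨m, by linarith⟩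
    rw [hb] at hb2
    have hdvd2 : ((2*n:ℕ):ℤ) ∣ (((y.val : ℤ) + r) - (x.val : ℤ)) := by
      rw [← bar_eq_iff, hb2, bar_valZ]
    have hrval : (r : ℤ) = (x.val : ℤ) + 2*n - y.val := by
      rcases win n hn hdvd2 (by omega) (by omega) with h | h | h <;> omega
    have : ((x.val + 2*n - y.val : ℕ) : ℤ) = (r : ℤ) := by
      push_cast [Nat.cast_sub (by omega : y.val ≤ x.val + 2*n)]; omega
    have hrr : (x.val + 2*n - y.val : ℕ) = r := by omega
    rwa [hrr]

lemma σC_nc (hn : 1 ≤ n) (hC : IsConfigB n C) :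
    ¬ ∃ i j : ZMod (2*n), i.val < j.val ∧ j.val < ((σC hn hC) i).val ∧
      ((σC hn hC) i).val < ((σC hn hC) j).val := by
  haveI : NeZero (2*n) := ⟨by omega⟩
  rintro ⟨i, j, h1, h2, h3⟩
  have hlti : i.val < (σC hn hC i).val := by omega
  have hltj : j.val < (σC hn hC j).val := by omega
  have bvi : 0 ≤ (i.val : ℤ) ∧ (i.val : ℤ) < 2*n := ⟨by positivity, by exact_mod_cast ZMod.val_lt i⟩
  have bvj : 0 ≤ (j.val : ℤ) ∧ (j.val : ℤ) < 2*n := ⟨by positivity, by exact_mod_cast ZMod.val_lt j⟩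
  have bvsi : 0 ≤ ((σC hn hC i).val : ℤ) ∧ ((σC hn hC i).val : ℤ) < 2*n :=
    ⟨by positivity, by exact_mod_cast (ZMod.val_lt _)⟩
  have bvsj : 0 ≤ ((σC hn hC j).val : ℤ) ∧ ((σC hn hC j).val : ℤ) < 2*n :=
    ⟨by positivity, by exact_mod_cast (ZMod.val_lt _)⟩
  have h1' : (i.val : ℤ) < (j.val : ℤ) := by exact_mod_cast h1
  have h2' : (j.val : ℤ) < ((σC hn hC i).val : ℤ) := by exact_mod_cast h2
  have h3' : ((σC hn hC i).val : ℤ) < ((σC hn hC j).val : ℤ) := by exact_mod_cast h3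
  set vi := (i.val : ℤ)
  set vj := (j.val : ℤ)
  set vsi := ((σC hn hC i).val : ℤ)
  set vsj := ((σC hn hC j).val : ℤ)
  have ci := chord_of hn hC i hlti
  have cj := chord_of hn hC j hltj
  have csub_i : (((σC hn hC i).val - i.val : ℕ) : ℤ) = vsi - vi := by
    push_cast [Nat.cast_sub hlti.le]; ring
  have csub_i' : ((i.val + 2*n - (σC hn hC i).val : ℕ) : ℤ) = vi + 2*n - vsi := by
    push_cast [Nat.cast_sub (by omega : (σC hn hC i).val ≤ i.val + 2*n)]; ring
  have csub_j : (((σC hn hC j).val - j.val : ℕ) : ℤ) = vsj - vj := by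
    push_cast [Nat.cast_sub hltj.le]; ring
  have csub_j' : ((j.val + 2*n - (σC hn hC j).val : ℕ) : ℤ) = vj + 2*n - vsj := by
    push_cast [Nat.cast_sub (by omega : (σC hn hC j).val ≤ j.val + 2*n)]; ring
  rcases ci with ci | ci <;> rcases cj with cj | cj
  · -- short short
    have hri : ((σC hn hC i).val - i.val : ℕ) ≤ n := hC.1 _ ci
    rcases key4 hn hC cj ci (by rw [cfZ_def, csub_i, csub_j]; split_ifs <;> omega)
      with ⟨hq, hss⟩ | ⟨hq, hss⟩
    · omega
    · have := congrArg (Nat.cast : ℕ → ℤ) hss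
      rw [csub_i, csub_j] at this
      omega
  · -- i short, j long : shift j-chord down by 2n
    have cj2 := perC hC _ _ cj (-2)
    have hri : ((σC hn hC i).val - i.val : ℕ) ≤ n := hC.1 _ ci
    rcases key4 hn hC ci cj2 (by rw [cfZ_def, csub_i, csub_j']; split_ifs <;> omega)
      with ⟨hq, hss⟩ | ⟨hq, hss⟩
    · omega
    · have := congrArg (Nat.cast : ℕ → ℤ) hss
      rw [csub_i, csub_j'] at this
      omega
  · -- i long, j short
    rcases key4 hn hC ci cj (by rw [cfZ_def, csub_i', csub_j]; split_ifs <;> omega)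
      with ⟨hq, hss⟩ | ⟨hq, hss⟩
    · omega
    · have := congrArg (Nat.cast : ℕ → ℤ) hss
      rw [csub_i', csub_j] at this
      omega
  · -- long long
    have hrj : (j.val + 2*n - (σC hn hC j).val : ℕ) ≤ n := hC.1 _ cj
    rcases key4 hn hC cj ci (by rw [cfZ_def, csub_i', csub_j']; split_ifs <;> omega)
      with ⟨hq, hss⟩ | ⟨hq, hss⟩
    · omega
    · have := congrArg (Nat.cast : ℕ → ℤ) hss
      rw [csub_i', csub_j'] at this
      omega

end ForwardProof



namespace ForwardProof

lemma C_eq_Cset (hn : 1 ≤ n) (hC : IsConfigB n C) : C = Cset n (σC hn hC) := by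
  haveI : NeZero (2*n) := ⟨by omega⟩
  ext ⟨p, r⟩
  constructor
  · intro hm
    refine ⟨hC.1 _ hm, ?_⟩
    exact (σC_eq ⟨p, r, hm, Or.inl ⟨rfl, rfl⟩⟩).symm
  · rintro ⟨hr, heq⟩
    simp only at hr heq
    obtain ⟨p₀, r₀, hm₀, hca⟩ := σC_spec (hn := hn) (hC := hC) (((p:ℤ)) : ZMod (2*n))
    have hr₀ : r₀ ≤ n := hC.1 _ hm₀
    rcases hca with ⟨ha, hb⟩ | ⟨ha, hb⟩
    · have hdvd : ((2*n:ℕ):ℤ) ∣ (p - p₀) := by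
        rw [← bar_eq_iff, ha]
      have hm2 : ((p, r₀) : ℤ × ℕ) ∈ C := shift_to hC hdvd hm₀
      have hbars : (((p + r₀ : ℤ)) : ZMod (2*n)) = (((p + r : ℤ)) : ZMod (2*n)) := by
        rw [heq, ← hb, bar_eq_iff]
        obtain ⟨m, hmm⟩ := hdvd
        exact ⟨m, by linarith⟩
      rw [bar_eq_iff] at hbars
      have : (r₀ : ℤ) = r := by
        rcases win n hn hbars (by omega) (by omega) with h|h|h <;> omega
      have : r₀ = r := by omega
      rwa [← this]
    · have hdvd : ((2*n:ℕ):ℤ) ∣ ((p - r₀) - p₀) := by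
        have h0 : (((p₀ + r₀ : ℤ)) : ZMod (2*n)) = (((p:ℤ)) : ZMod (2*n)) := hb
        rw [bar_eq_iff] at h0
        have h3 : (p - (r₀:ℤ)) - p₀ = -((p₀ + r₀) - p) + 0 := by ring
        rw [h3, add_zero]
        exact dvd_neg.mpr h0
      have hm2 : ((p - r₀, r₀) : ℤ × ℕ) ∈ C := shift_to hC hdvd hm₀
      have hbars : (((p - (r₀:ℤ) : ℤ)) : ZMod (2*n)) = (((p + r : ℤ)) : ZMod (2*n)) := by
        rw [heq, ← ha, bar_eq_iff]
        obtain ⟨m, hmm⟩ := hdvd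
        exact ⟨m, by linarith⟩
      rw [bar_eq_iff] at hbars
      have hsum : (r:ℤ) + r₀ = 0 ∨ (r:ℤ) + r₀ = 2*n := by
        rcases win n hn hbars (by omega) (by omega) with h|h|h <;> omega
      rcases hsum with h | h
      · have hr0 : r = 0 ∧ r₀ = 0 := by omega
        have : (p - (r₀:ℤ), r₀) = ((p : ℤ), r) := by
          rw [hr0.1, hr0.2]; simp
        rwa [this] at hm2
      · have hrn : r = n ∧ r₀ = n := by omega
        have := perC hC _ _ hm2 1
        have heq2 : (p - (r₀:ℤ) + 1*(n:ℤ), r₀) = ((p:ℤ), r) := by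
          rw [hrn.1, hrn.2, Prod.mk.injEq]
          exact ⟨by ring, rfl⟩
        rwa [heq2] at this
end ForwardProof

lemma forward (n : ℕ) (C : Set (ℤ × ℕ)) (hn : 1 ≤ n) (hC : IsConfigB n C) :
    ∃ σ : ZMod (2*n) → ZMod (2*n), IsSymTwoBrauer n σ ∧ C = Cset n σ := by
  refine ⟨ForwardProof.σC hn hC, ⟨ForwardProof.σC_inv, ForwardProof.σC_nc hn hC, ?_⟩,
    ForwardProof.C_eq_Cset hn hC⟩
  intro i
  exact ForwardProof.σC_rot i

lemma sigma_unique (n : ℕ) (hn : 1 ≤ n) (σ₁ σ₂ : ZMod (2*n) → ZMod (2*n))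
    (h₁ : IsSymTwoBrauer n σ₁) (h₂ : IsSymTwoBrauer n σ₂)
    (hEq : Cset n σ₁ = Cset n σ₂) : σ₁ = σ₂ := by
  haveI : NeZero (2*n) := ⟨by omega⟩
  funext i
  set r := (σ₁ i - i).val with hrdef
  have hrbar : ((r : ℕ) : ZMod (2*n)) = σ₁ i - i := bar_val _ _
  have hrlt : r < 2*n := ZMod.val_lt _
  have hbar1 : (((i.val : ℤ) + r : ℤ) : ZMod (2*n)) = σ₁ i := by
    push_cast
    rw [bar_val _ i, hrbar]
    ring
  by_cases hr : r ≤ n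
  · have hv : (((i.val : ℤ), r) : ℤ × ℕ) ∈ Cset n σ₁ := by
      refine ⟨hr, ?_⟩
      simp only
      rw [hbar1, bar_valZ]
    rw [hEq] at hv
    have h2 := hv.2
    simp only at h2
    rw [hbar1, bar_valZ] at h2
    exact h2
  · -- r > n
    set s := (i - σ₁ i).val with hsdef
    have hsbar : ((s : ℕ) : ZMod (2*n)) = i - σ₁ i := bar_val _ _
    have hslt : s < 2*n := ZMod.val_lt _
    have hsum : ((r + s : ℕ) : ZMod (2*n)) = 0 := by push_cast; rw [hrbar, hsbar]; ring
    have hdvd : ((2*n:ℕ):ℤ) ∣ ((r:ℤ) + s) := by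
      have h0 : (((r:ℤ) + s : ℤ) : ZMod (2*n)) = ((0:ℤ) : ZMod (2*n)) := by
        push_cast at hsum ⊢
        linear_combination hsum
      have := (bar_eq_iff (2*n) ((r:ℤ) + s) 0).mp h0
      simpa using this
    have hrs : r + s = 2*n := by
      rcases win n hn hdvd (by omega) (by omega) with h|h|h <;> omega
    have hbar2 : ((((σ₁ i).val : ℤ) + s : ℤ) : ZMod (2*n)) = i := by
      push_cast
      rw [bar_val _ (σ₁ i), hsbar]
      ring
    have hv : ((((σ₁ i).val : ℤ), s) : ℤ × ℕ) ∈ Cset n σ₁ := by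
      refine ⟨by omega, ?_⟩
      simp only
      rw [hbar2, bar_valZ, h₁.1]
    rw [hEq] at hv
    have h2 := hv.2
    simp only at h2
    rw [hbar2, bar_valZ] at h2
    have := congrArg σ₂ h2
    rw [h₂.1] at this
    rw [this]

/-- Theorem 7.2 (type `B`): a subset `C` of the vertices of the valued translation
quiver realizing `ℤB_{n+1}` is a configuration iff it is of the form
`{(p,r) : (p+r : ZMod 2n) = σ (p : ZMod 2n)}` for a (unique) symmetric `2`-Brauer
relation `σ` of rank `2n`; this gives a bijection between configurations of
`ℤB_{n+1}` and symmetric `2`-Brauer relations of rank `2n`. -/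
theorem config_ZB_iff_symTwoBrauer (n : ℕ) (hn : 1 ≤ n) :
    (∀ C : Set (ℤ × ℕ),
      IsConfigB n C ↔
        ∃ σ : ZMod (2 * n) → ZMod (2 * n), IsSymTwoBrauer n σ ∧
          C = {v : ℤ × ℕ | v.2 ≤ n ∧
            ((v.1 + (v.2 : ℤ) : ℤ) : ZMod (2 * n)) = σ ((v.1 : ℤ) : ZMod (2 * n))}) ∧
      ∀ σ₁ σ₂ : ZMod (2 * n) → ZMod (2 * n),
        IsSymTwoBrauer n σ₁ → IsSymTwoBrauer n σ₂ →
        {v : ℤ × ℕ | v.2 ≤ n ∧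
            ((v.1 + (v.2 : ℤ) : ℤ) : ZMod (2 * n)) = σ₁ ((v.1 : ℤ) : ZMod (2 * n))} =
          {v : ℤ × ℕ | v.2 ≤ n ∧
            ((v.1 + (v.2 : ℤ) : ℤ) : ZMod (2 * n)) = σ₂ ((v.1 : ℤ) : ZMod (2 * n))} →
        σ₁ = σ₂ := by
  constructor
  · intro C
    constructor
    · intro hC
      obtain ⟨σ, hσ, hCeq⟩ := forward n C hn hC
      exact ⟨σ, hσ, hCeq⟩
    · rintro ⟨σ, hσ, rfl⟩
      exact backward hn hσ
  · intro σ₁ σ₂ h₁ h₂ hEq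
    exact sigma_unique n hn σ₁ σ₂ h₁ h₂ hEq
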